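/- For a nonempty worm A all of whose modalities are strictly greater than α, and any worm B, GLP_Λ proves A⟨α⟩B ↔ A⟨α⟩ⁿB for every n ≥ 1, where ⟨α⟩ⁿ denotes n consecutive occurrences of ⟨α⟩. -/
import Mathlib


inductive Formula (L : Type) : Type where
  | bot : Formula L
  | var : Nat → Formula L
  | imp : Formula L → Formula L → Formula L
  | box : L → Formula L → Formula L

namespace Formula

variable {L : Type}

def neg (φ : Formula L) : Formula L := imp φ bot
def top : Formula L := neg bot
def and (φ ψ : Formula L) : Formula L := neg (imp φ ψ.neg)
def or (φ ψ : Formula L) : Formula L := imp φ.neg ψ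
def iff (φ ψ : Formula L) : Formula L := (imp φ ψ).and (imp ψ φ)
def dia (α : L) (φ : Formula L) : Formula L := neg (box α φ.neg)

end Formula

open Formula

/-- Provability in the polymodal provability logic `GLP_Λ` over a linear order. -/
inductive GLP {L : Type} [LinearOrder L] : Formula L → Prop where
  | k1 : ∀ φ ψ : Formula L, GLP (φ.imp (ψ.imp φ))
  | k2 : ∀ φ ψ χ : Formula L, GLP ((φ.imp (ψ.imp χ)).imp ((φ.imp ψ).imp (φ.imp χ)))
  | k3 : ∀ φ ψ : Formula L, GLP ((φ.neg.imp ψ.neg).imp (ψ.imp φ))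
  | dist : ∀ (α : L) (φ ψ : Formula L), GLP ((Formula.box α (φ.imp ψ)).imp ((Formula.box α φ).imp (Formula.box α ψ)))
  | lob : ∀ (α : L) (φ : Formula L), GLP ((Formula.box α ((Formula.box α φ).imp φ)).imp (Formula.box α φ))
  | trans : ∀ (α β : L) (φ : Formula L), α ≤ β → GLP ((Formula.box α φ).imp (Formula.box β (Formula.box α φ)))
  | negintro : ∀ (α β : L) (φ : Formula L), α < β → GLP ((dia α φ).imp (Formula.box β (dia α φ)))
  | mono : ∀ (α β : L) (φ : Formula L), α ≤ β → GLP ((Formula.box α φ).imp (Formula.box β φ))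
  | mp : ∀ φ ψ : Formula L, GLP (φ.imp ψ) → GLP φ → GLP ψ
  | nec : ∀ (α : L) (φ : Formula L), GLP φ → GLP (Formula.box α φ)

/-- The worm (iterated consistency statement) associated to a list of modalities. -/
def worm {L : Type} : List L → Formula L
  | [] => Formula.top
  | α :: w => Formula.dia α (worm w)

/-- `Lt α A B` iff `GLP ⊢ B → ⟨α⟩A`. -/
def Lt {L : Type} [LinearOrder L] (α : L) (A B : List L) : Prop :=
  GLP ((worm B).imp (Formula.dia α (worm A)))

def Le {L : Type} [LinearOrder L] (α : L) (A B : List L) : Prop :=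
  Lt α A B ∨ A = B

section GLPAux
set_option linter.unusedSectionVars false

open Formula

variable {L : Type} [LinearOrder L]

private lemma tid (φ : Formula L) : GLP (φ.imp φ) :=
  GLP.mp _ _ (GLP.mp _ _ (GLP.k2 φ (φ.imp φ) φ) (GLP.k1 φ (φ.imp φ))) (GLP.k1 φ φ)

private lemma imp_trans {φ ψ χ : Formula L} (h1 : GLP (φ.imp ψ)) (h2 : GLP (ψ.imp χ)) :
    GLP (φ.imp χ) := by
  have h3 : GLP (φ.imp (ψ.imp χ)) := GLP.mp _ _ (GLP.k1 (ψ.imp χ) φ) h2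
  exact GLP.mp _ _ (GLP.mp _ _ (GLP.k2 φ ψ χ) h3) h1

private lemma flipT {φ ψ χ : Formula L} (h : GLP (φ.imp (ψ.imp χ))) :
    GLP (ψ.imp (φ.imp χ)) := by
  have h3 : GLP ((φ.imp ψ).imp (φ.imp χ)) := GLP.mp _ _ (GLP.k2 φ ψ χ) h
  exact imp_trans (GLP.k1 ψ φ) h3

private lemma swap_mp {φ ψ χ : Formula L} (h1 : GLP (φ.imp (ψ.imp χ))) (h2 : GLP ψ) :
    GLP (φ.imp χ) := GLP.mp _ _ (flipT h1) h2

/-- from ⊢ χ→δ get ⊢ (ψ→χ)→(ψ→δ) -/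
private lemma compL {ψ χ δ : Formula L} (h : GLP (χ.imp δ)) :
    GLP ((ψ.imp χ).imp (ψ.imp δ)) :=
  GLP.mp _ _ (GLP.k2 ψ χ δ) (GLP.mp _ _ (GLP.k1 (χ.imp δ) ψ) h)

private lemma imp_trans_inner {A B C D : Formula L} (h : GLP (A.imp (B.imp C)))
    (g : GLP (C.imp D)) : GLP (A.imp (B.imp D)) :=
  imp_trans h (compL g)

/-- composition combinator: ⊢ (X→Y)→((Y→Z)→(X→Z)) -/
private lemma compTT (X Y Z : Formula L) :
    GLP ((X.imp Y).imp ((Y.imp Z).imp (X.imp Z))) :=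
  flipT (imp_trans (GLP.k1 (Y.imp Z) X) (GLP.k2 X Y Z))

/-- from ⊢ φ→ψ get ⊢ (ψ→χ)→(φ→χ) -/
private lemma compT2 {φ ψ : Formula L} (χ : Formula L) (h : GLP (φ.imp ψ)) :
    GLP ((ψ.imp χ).imp (φ.imp χ)) :=
  GLP.mp _ _ (compTT φ ψ χ) h

private lemma dni (φ : Formula L) : GLP (φ.imp φ.neg.neg) := by
  exact flipT (φ := φ.neg) (ψ := φ) (χ := Formula.bot) (tid φ.neg)

private lemma dne (φ : Formula L) : GLP (φ.neg.neg.imp φ) :=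
  GLP.mp _ _ (GLP.k3 φ φ.neg.neg) (dni φ.neg)

private lemma contrapose {φ ψ : Formula L} (h : GLP (φ.imp ψ)) :
    GLP (ψ.neg.imp φ.neg) := by
  exact compT2 (χ := Formula.bot) h

private lemma box_mono {φ ψ : Formula L} (γ : L) (h : GLP (φ.imp ψ)) :
    GLP ((Formula.box γ φ).imp (Formula.box γ ψ)) :=
  GLP.mp _ _ (GLP.dist γ φ ψ) (GLP.nec γ _ h)

private lemma dia_mono {φ ψ : Formula L} (γ : L) (h : GLP (φ.imp ψ)) :
    GLP ((dia γ φ).imp (dia γ ψ)) := by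
  exact contrapose (box_mono γ (contrapose h))

private lemma exfalsoT (φ : Formula L) : GLP (Formula.bot.imp φ) := by
  exact imp_trans (GLP.k1 Formula.bot φ.neg) (dne φ)

/-- ⊢ ⟨γ⟩⟨γ⟩φ → ⟨γ⟩φ -/
private lemma dia_dia (γ : L) (φ : Formula L) :
    GLP ((dia γ (dia γ φ)).imp (dia γ φ)) := by
  have h1 : GLP ((Formula.box γ φ.neg).imp (Formula.box γ (Formula.box γ φ.neg))) :=
    GLP.trans γ γ φ.neg le_rfl
  have h2 : GLP ((Formula.box γ (Formula.box γ φ.neg)).imp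
      (Formula.box γ (Formula.box γ φ.neg).neg.neg)) :=
    box_mono γ (dni (Formula.box γ φ.neg))
  exact contrapose (imp_trans h1 h2)

/-- ⊢ ⟨β⟩φ → ⟨α⟩φ for α ≤ β -/
private lemma dia_down {α β : L} (h : α ≤ β) (φ : Formula L) :
    GLP ((dia β φ).imp (dia α φ)) :=
  contrapose (GLP.mono α β φ.neg h)

/-- ⊢ ⟨β⟩θ → ⟨β⟩⟨α⟩θ for α < β -/
private lemma dia_insert {α β : L} (h : α < β) (θ : Formula L) :
    GLP ((dia β θ).imp (dia β (dia α θ))) := by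
  have h3 : GLP ((dia β θ).imp (Formula.box β (dia α θ))) :=
    imp_trans (dia_down h.le θ) (GLP.negintro α β θ h)
  have t1 : GLP ((Formula.box β (dia α θ).neg).imp
      ((Formula.box β (dia α θ)).imp (Formula.box β Formula.bot))) :=
    GLP.dist β (dia α θ) Formula.bot
  have t3 : GLP ((Formula.box β (dia α θ).neg).imp
      ((Formula.box β (dia α θ)).imp (Formula.box β θ.neg))) :=
    imp_trans_inner t1 (box_mono β (exfalsoT θ.neg))
  have t4 := flipT t3
  have cp : GLP (((Formula.box β (dia α θ).neg).imp (Formula.box β θ.neg)).imp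
      ((Formula.box β θ.neg).neg.imp (Formula.box β (dia α θ).neg).neg)) := by
    exact compTT (Formula.box β (dia α θ).neg) (Formula.box β θ.neg) Formula.bot
  have t5 : GLP ((Formula.box β (dia α θ)).imp ((dia β θ).imp (dia β (dia α θ)))) := by
    exact imp_trans t4 cp
  have t6 : GLP ((dia β θ).imp ((dia β θ).imp (dia β (dia α θ)))) := imp_trans h3 t5
  exact GLP.mp _ _ (GLP.mp _ _ (GLP.k2 (dia β θ) (dia β θ) (dia β (dia α θ))) t6)
    (tid (dia β θ))

private lemma and_introT {X Y : Formula L} (hx : GLP X) (hy : GLP Y) : GLP (X.and Y) := by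
  have a : GLP ((X.imp Y.neg).imp Y.neg) :=
    GLP.mp _ _ (flipT (φ := X.imp Y.neg) (ψ := X) (χ := Y.neg) (tid (X.imp Y.neg))) hx
  have b : GLP (Y.imp ((X.imp Y.neg).imp Formula.bot)) :=
    flipT (φ := X.imp Y.neg) (ψ := Y) (χ := Formula.bot) a
  exact GLP.mp _ _ b hy

private def diaList : List L → Formula L → Formula L
  | [], φ => φ
  | a :: l, φ => dia a (diaList l φ)

private lemma worm_append (X Y : List L) : worm (X ++ Y) = diaList X (worm Y) := by
  induction X with
  | nil => rfl
  | cons a l ih => simp [worm, diaList, ih]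

private lemma diaList_append (X Y : List L) (φ : Formula L) :
    diaList (X ++ Y) φ = diaList X (diaList Y φ) := by
  induction X with
  | nil => rfl
  | cons a l ih => simp [diaList, ih]

private lemma diaList_mono {φ ψ : Formula L} (D : List L) (h : GLP (φ.imp ψ)) :
    GLP ((diaList D φ).imp (diaList D ψ)) := by
  induction D with
  | nil => exact h
  | cons a l ih => exact dia_mono a ih

/-- key lemma: for A = D ++ [β], α < β:
  ⊢ worm(A++α::C) ↔ worm(A++α::α::C), both directions -/
private lemma key (α : L) (A : List L) (D : List L) (β : L) (hA : A = D ++ [β])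
    (hβ : α < β) (C : List L) :
    GLP ((worm (A ++ α :: C)).imp (worm (A ++ α :: α :: C))) ∧
    GLP ((worm (A ++ α :: α :: C)).imp (worm (A ++ α :: C))) := by
  subst hA
  have e1 : worm ((D ++ [β]) ++ α :: C) = diaList D (dia β (dia α (worm C))) := by
    rw [worm_append, diaList_append]; rfl
  have e2 : worm ((D ++ [β]) ++ α :: α :: C)
      = diaList D (dia β (dia α (dia α (worm C)))) := by
    rw [worm_append, diaList_append]; rfl
  rw [e1, e2]
  constructor
  · exact diaList_mono D (dia_insert hβ (dia α (worm C)))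
  · exact diaList_mono D (dia_mono β (dia_dia α (worm C)))

end GLPAux

/-- For a nonempty worm `A` with all modalities `> α` and any worm `B`,
`GLP ⊢ A⟨α⟩B ↔ A⟨α⟩ⁿB` for every `n ≥ 1`. -/
theorem remove_multiple_minimals {L : Type} [LinearOrder L] (α : L)
    (A B : List L) (hne : A ≠ []) (hA : ∀ β ∈ A, α < β)
    (n : Nat) (hn : 1 ≤ n) :
    GLP ((worm (A ++ α :: B)).iff (worm (A ++ List.replicate n α ++ B))) := by
  obtain hnil | ⟨D, β, hAc⟩ := A.eq_nil_or_concat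
  · exact absurd hnil hne
  have hAdef : A = D ++ [β] := by simpa using hAc
  have hβ : α < β := hA β (by rw [hAdef]; simp)
  have aux : ∀ m : Nat,
      GLP ((worm (A ++ α :: B)).imp (worm (A ++ List.replicate (m + 1) α ++ B))) ∧
      GLP ((worm (A ++ List.replicate (m + 1) α ++ B)).imp (worm (A ++ α :: B))) := by
    intro m
    induction m with
    | zero =>
      have e : A ++ List.replicate 1 α ++ B = A ++ α :: B := by simp
      rw [e]
      exact ⟨tid _, tid _⟩
    | succ m ih =>
      have e1 : A ++ List.replicate (m + 1) α ++ B
          = A ++ α :: (List.replicate m α ++ B) := by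
        simp [List.replicate_succ]
      have e2 : A ++ List.replicate (m + 2) α ++ B
          = A ++ α :: α :: (List.replicate m α ++ B) := by
        simp [List.replicate_succ]
      obtain ⟨k1, k2⟩ := key α A D β hAdef hβ (List.replicate m α ++ B)
      rw [e1] at ih
      rw [e2]
      exact ⟨imp_trans ih.1 k1, imp_trans k2 ih.2⟩
  obtain ⟨m, rfl⟩ : ∃ m, n = m + 1 := ⟨n - 1, (Nat.succ_pred_eq_of_pos hn).symm⟩
  obtain ⟨h1, h2⟩ := aux m
  exact and_introT h1 h2
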